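/- Let A be an n×n real matrix and Q a symmetric positive definite n×n real matrix. Define h(S) = (A S⁻¹ Aᵀ + Q)⁻¹ for symmetric positive definite n×n matrices S. Then h is matrix concave: for all symmetric positive definite S₁, S₂ and all t ∈ [0,1], h(t S₁ + (1 − t) S₂) ≥ t h(S₁) + (1 − t) h(S₂) in the Loewner order. -/

import Mathlib

open Matrix

private lemma herm_smul {m : Type*} {M : Matrix m m ℝ} (hM : M.IsHermitian) (c : ℝ) :
    (c • M).IsHermitian := by
  unfold Matrix.IsHermitian
  rw [conjTranspose_smul, star_trivial, hM.eq]

private lemma psd_smul {m : Type*} [Fintype m] {M : Matrix m m ℝ} (hM : M.PosSemidef)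
    {c : ℝ} (hc : 0 ≤ c) : (c • M).PosSemidef := by
  refine posSemidef_iff_dotProduct_mulVec.mpr ⟨herm_smul hM.1 c, fun x => ?_⟩
  have := (posSemidef_iff_dotProduct_mulVec.mp hM).2 x
  simp only [smul_mulVec, dotProduct_smul, smul_eq_mul]
  positivity

private lemma pd_convex {n : ℕ} {X Y : Matrix (Fin n) (Fin n) ℝ} (hX : X.PosDef)
    (hY : Y.PosDef) {t : ℝ} (ht0 : 0 ≤ t) (ht1 : t ≤ 1) :
    (t • X + (1 - t) • Y).PosDef := by
  refine posDef_iff_dotProduct_mulVec.mpr ⟨(herm_smul hX.1 t).add (herm_smul hY.1 (1 - t)), fun x hx => ?_⟩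
  have h1 := hX.dotProduct_mulVec_pos hx
  have h2 := hY.dotProduct_mulVec_pos hx
  simp only [add_mulVec, smul_mulVec, dotProduct_add, dotProduct_smul,
    smul_eq_mul] at *
  rcases ht0.lt_or_eq with h | h
  · nlinarith [mul_nonneg (by linarith : (0:ℝ) ≤ 1 - t) h2.le, mul_pos h h1]
  · rw [← h]; ring_nf; linarith

/-- Convexity of matrix inverse on positive definite matrices. -/
private lemma inv_convex {n : ℕ} {X Y : Matrix (Fin n) (Fin n) ℝ} (hX : X.PosDef)
    (hY : Y.PosDef) {t : ℝ} (ht0 : 0 ≤ t) (ht1 : t ≤ 1) :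
    ((t • X⁻¹ + (1 - t) • Y⁻¹) - (t • X + (1 - t) • Y)⁻¹).PosSemidef := by
  have hZ : (t • X + (1 - t) • Y).PosDef := pd_convex hX hY ht0 ht1
  haveI := hX.isUnit.invertible
  haveI := hY.isUnit.invertible
  haveI := hZ.isUnit.invertible
  have hBX : (fromBlocks X (1 : Matrix (Fin n) (Fin n) ℝ)
      (1 : Matrix (Fin n) (Fin n) ℝ)ᴴ X⁻¹).PosSemidef := by
    rw [Matrix.PosDef.fromBlocks₁₁ _ _ hX]
    simpa using Matrix.PosSemidef.zero
  have hBY : (fromBlocks Y (1 : Matrix (Fin n) (Fin n) ℝ)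
      (1 : Matrix (Fin n) (Fin n) ℝ)ᴴ Y⁻¹).PosSemidef := by
    rw [Matrix.PosDef.fromBlocks₁₁ _ _ hY]
    simpa using Matrix.PosSemidef.zero
  have hsum : (fromBlocks (t • X + (1 - t) • Y) (1 : Matrix (Fin n) (Fin n) ℝ)
      (1 : Matrix (Fin n) (Fin n) ℝ)ᴴ (t • X⁻¹ + (1 - t) • Y⁻¹)).PosSemidef := by
    have heq : fromBlocks (t • X + (1 - t) • Y) (1 : Matrix (Fin n) (Fin n) ℝ)
        (1 : Matrix (Fin n) (Fin n) ℝ)ᴴ (t • X⁻¹ + (1 - t) • Y⁻¹)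
        = t • (fromBlocks X (1 : Matrix (Fin n) (Fin n) ℝ)
            (1 : Matrix (Fin n) (Fin n) ℝ)ᴴ X⁻¹)
          + (1 - t) • (fromBlocks Y (1 : Matrix (Fin n) (Fin n) ℝ)
            (1 : Matrix (Fin n) (Fin n) ℝ)ᴴ Y⁻¹) := by
      have e1 : t • (1 : Matrix (Fin n) (Fin n) ℝ) + (1 - t) • 1 = 1 := by
        rw [← add_smul, show t + (1 - t) = 1 by ring, one_smul]
      have e2 : t • (1 : Matrix (Fin n) (Fin n) ℝ)ᴴ + (1 - t) • 1ᴴ = 1ᴴ := by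
        rw [← add_smul, show t + (1 - t) = 1 by ring, one_smul]
      rw [Matrix.fromBlocks_smul, Matrix.fromBlocks_smul, Matrix.fromBlocks_add, e1, e2]
    rw [heq]
    exact (psd_smul hBX ht0).add (psd_smul hBY (by linarith))
  have := (Matrix.PosDef.fromBlocks₁₁ _ _ hZ).mp hsum
  simpa using this

private lemma woodbury {n : ℕ} (A Q : Matrix (Fin n) (Fin n) ℝ) (hQ : Q.PosDef)
    {S : Matrix (Fin n) (Fin n) ℝ} (hS : S.PosDef) :
    (A * S⁻¹ * Aᵀ + Q)⁻¹ =
      Q⁻¹ - (Q⁻¹ * A) * (S + Aᵀ * Q⁻¹ * A)⁻¹ * (Aᵀ * Q⁻¹) := by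
  have hM : (Aᵀ * Q⁻¹ * A).PosSemidef := by
    have := hQ.inv.posSemidef.conjTranspose_mul_mul_same A
    rwa [conjTranspose_eq_transpose_of_trivial] at this
  have hSM : (S + Aᵀ * Q⁻¹ * A).PosDef := hS.add_posSemidef hM
  have hSinv : (S⁻¹)⁻¹ = S :=
    Matrix.nonsing_inv_nonsing_inv S ((Matrix.isUnit_iff_isUnit_det S).mp hS.isUnit)
  have h := Matrix.add_mul_mul_inv_eq_sub Q A S⁻¹ Aᵀ hQ.isUnit hS.inv.isUnit
    (by rw [hSinv]; exact hSM.isUnit)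
  rw [hSinv] at h
  rw [add_comm, h]
  rw [mul_assoc, mul_assoc, mul_assoc]

set_option maxHeartbeats 1000000 in
/-- Matrix concavity of `h(S) = (A S⁻¹ Aᵀ + Q)⁻¹` on symmetric positive
definite matrices, for `Q` symmetric positive definite: for all `t ∈ [0,1]`,
`h(t S₁ + (1 − t) S₂) ≥ t h(S₁) + (1 − t) h(S₂)` in the Loewner order. -/
theorem stmt_15 {n : ℕ} (A Q : Matrix (Fin n) (Fin n) ℝ) (hQ : Q.PosDef)
    (S₁ S₂ : Matrix (Fin n) (Fin n) ℝ) (hS₁ : S₁.PosDef) (hS₂ : S₂.PosDef)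
    (t : ℝ) (ht0 : 0 ≤ t) (ht1 : t ≤ 1) :
    ((A * (t • S₁ + (1 - t) • S₂)⁻¹ * Aᵀ + Q)⁻¹ -
      (t • (A * S₁⁻¹ * Aᵀ + Q)⁻¹ + (1 - t) • (A * S₂⁻¹ * Aᵀ + Q)⁻¹)).PosSemidef := by
  set M : Matrix (Fin n) (Fin n) ℝ := Aᵀ * Q⁻¹ * A with hMdef
  have hM : M.PosSemidef := by
    have := hQ.inv.posSemidef.conjTranspose_mul_mul_same A
    rwa [conjTranspose_eq_transpose_of_trivial] at this
  have hZ : (t • S₁ + (1 - t) • S₂).PosDef := pd_convex hS₁ hS₂ ht0 ht1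
  have w1 := woodbury A Q hQ hS₁
  have w2 := woodbury A Q hQ hS₂
  have w3 := woodbury A Q hQ hZ
  rw [w1, w2, w3]
  have hcomb : (t • S₁ + (1 - t) • S₂) + M = t • (S₁ + M) + (1 - t) • (S₂ + M) := by
    module
  have hD : ((t • (S₁ + M)⁻¹ + (1 - t) • (S₂ + M)⁻¹)
      - (t • S₁ + (1 - t) • S₂ + M)⁻¹).PosSemidef := by
    rw [hcomb]
    exact inv_convex (hS₁.add_posSemidef hM) (hS₂.add_posSemidef hM) ht0 ht1
  have key : (Q⁻¹ - Q⁻¹ * A * (t • S₁ + (1 - t) • S₂ + M)⁻¹ * (Aᵀ * Q⁻¹)) -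
      (t • (Q⁻¹ - Q⁻¹ * A * (S₁ + M)⁻¹ * (Aᵀ * Q⁻¹))
        + (1 - t) • (Q⁻¹ - Q⁻¹ * A * (S₂ + M)⁻¹ * (Aᵀ * Q⁻¹)))
      = (Q⁻¹ * A) * ((t • (S₁ + M)⁻¹ + (1 - t) • (S₂ + M)⁻¹)
          - (t • S₁ + (1 - t) • S₂ + M)⁻¹) * (Aᵀ * Q⁻¹) := by
    simp only [Matrix.sub_mul, Matrix.mul_sub, Matrix.add_mul, Matrix.mul_add,
      Matrix.smul_mul, Matrix.mul_smul, smul_sub, smul_add]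
    module
  rw [key]
  have hconj := hD.mul_mul_conjTranspose_same (Q⁻¹ * A)
  have hQs : Q⁻¹ᵀ = Q⁻¹ := by
    have := hQ.isHermitian.inv.eq
    rwa [conjTranspose_eq_transpose_of_trivial] at this
  have hBH : (Q⁻¹ * A)ᴴ = Aᵀ * Q⁻¹ := by
    rw [conjTranspose_eq_transpose_of_trivial, Matrix.transpose_mul, hQs]
  rwa [hBH] at hconj
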